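/- The angle γ/2 between the two reflection lines governing inner and outer rotor collisions on the velocity circle satisfies cos(γ/2) = ((1 + η₁⁻¹)(1 + η₂⁻¹))^{−1/2}. Precisely: for η₁, η₂ > 0, the vectors u = (−(1+η₂)/√η₁, √η₂, 1) and v = (√η₁, −(1+η₁)/√η₂, 1) in ℝ³ satisfy |⟪u, v⟫| / (‖u‖·‖v‖) = ((1 + η₁⁻¹)(1 + η₂⁻¹))^{−1/2}, where ⟪·,·⟫ is the standard inner product and ‖·‖ the Euclidean norm. -/

import Mathlib

open RealInnerProductSpace

/-- The angle `γ/2` between the two reflection lines on the velocity circle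
satisfies `cos (γ/2) = ((1 + η₁⁻¹)(1 + η₂⁻¹))^(-1/2)`. -/
theorem angle_between_reflection_lines (η₁ η₂ : ℝ) (hη₁ : 0 < η₁) (hη₂ : 0 < η₂)
    (u v : EuclideanSpace ℝ (Fin 3))
    (hu : u = ![-(1 + η₂) / Real.sqrt η₁, Real.sqrt η₂, 1])
    (hv : v = ![Real.sqrt η₁, -(1 + η₁) / Real.sqrt η₂, 1]) :
    |⟪u, v⟫| / (‖u‖ * ‖v‖) = ((1 + η₁⁻¹) * (1 + η₂⁻¹)) ^ (-(1 / 2) : ℝ) := by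
  have ha0 : 0 < Real.sqrt η₁ := Real.sqrt_pos.mpr hη₁
  have hb0 : 0 < Real.sqrt η₂ := Real.sqrt_pos.mpr hη₂
  have ha : Real.sqrt η₁ ^ 2 = η₁ := Real.sq_sqrt hη₁.le
  have hb : Real.sqrt η₂ ^ 2 = η₂ := Real.sq_sqrt hη₂.le
  have hinner : ⟪u, v⟫ = -(1 + η₁ + η₂) := by
    simp only [PiLp.inner_apply, hu, hv, Fin.sum_univ_three, RCLike.inner_apply, conj_trivial,
      Matrix.cons_val_zero, Matrix.cons_val_one, Matrix.head_cons,
      Matrix.cons_val_two, Matrix.tail_cons]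
    field_simp
    ring
  have hN1 : ‖u‖ = Real.sqrt ((1 + η₂) * (1 + η₁ + η₂) / η₁) := by
    rw [EuclideanSpace.norm_eq]
    congr 1
    simp only [hu, Fin.sum_univ_three, Matrix.cons_val_zero, Matrix.cons_val_one, Matrix.head_cons,
      Matrix.cons_val_two, Matrix.tail_cons, Real.norm_eq_abs, sq_abs]
    field_simp
    rw [ha, hb]
    ring
  have hN2 : ‖v‖ = Real.sqrt ((1 + η₁) * (1 + η₁ + η₂) / η₂) := by
    rw [EuclideanSpace.norm_eq]
    congr 1
    simp only [hv, Fin.sum_univ_three, Matrix.cons_val_zero, Matrix.cons_val_one, Matrix.head_cons,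
      Matrix.cons_val_two, Matrix.tail_cons, Real.norm_eq_abs, sq_abs]
    field_simp
    rw [ha, hb]
    ring
  have hS : 0 < 1 + η₁ + η₂ := by linarith
  have hP : 0 < (1 + η₁⁻¹) * (1 + η₂⁻¹) := by positivity
  rw [hinner, hN1, hN2, ← Real.sqrt_mul (by positivity)]
  have hprod : (1 + η₂) * (1 + η₁ + η₂) / η₁ * ((1 + η₁) * (1 + η₁ + η₂) / η₂)
      = (1 + η₁ + η₂) ^ 2 * ((1 + η₁⁻¹) * (1 + η₂⁻¹)) := by
    field_simp
    ring
  rw [hprod, Real.sqrt_mul (by positivity), Real.sqrt_sq hS.le,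
    abs_neg, abs_of_pos hS]
  rw [Real.rpow_neg hP.le, ← Real.sqrt_eq_rpow]
  rw [div_eq_iff (by positivity)]
  field_simp
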